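/- arXiv:1006.4245 — 2 statements merged into one kernel-verified Lean document; each statement's English description precedes it below -/
import Mathlib

section
/- Every function holomorphic on the complement of the origin in ℂ² extends holomorphically across the origin: if f : ℂ² → ℂ is complex differentiable at every point of ℂ² ∖ {0}, then there exists a function F : ℂ² → ℂ that is complex differentiable at every point of ℂ² and agrees with f on ℂ² ∖ {0}. -/
open Complex Metric Set MeasureTheory intervalIntegral Filter
open scoped Real Topology

private lemma lip_slice {g : ℂ → ℂ} (hg : Differentiable ℂ g) {M : ℝ} (hM0 : 0 ≤ M)
    (hM : ∀ ζ : ℂ, ‖ζ‖ ≤ 1 → ‖g ζ‖ ≤ M) {w w' : ℂ} (hw : ‖w‖ ≤ 4⁻¹) (hw' : ‖w'‖ ≤ 4⁻¹) :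
    ‖g w - g w'‖ ≤ 2 * M * ‖w - w'‖ := by
  have hball : ∀ {u : ℂ}, ‖u‖ ≤ 4⁻¹ → u ∈ ball (0:ℂ) 1 := fun hu =>
    mem_ball_zero_iff.2 (lt_of_le_of_lt hu (by norm_num))
  have hC : ∀ {u : ℂ}, ‖u‖ ≤ 4⁻¹ →
      (2*(π:ℂ)*I)⁻¹ • (∮ ζ in C(0, 1), (ζ - u)⁻¹ • g ζ) = g u := fun hu =>
    hg.diffContOnCl.two_pi_i_inv_smul_circleIntegral_sub_inv_smul (hball hu)
  have hne : ∀ {ζ u : ℂ}, ζ ∈ sphere (0:ℂ) 1 → ‖u‖ ≤ 4⁻¹ → (3:ℝ)/4 ≤ ‖ζ - u‖ := by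
    intro ζ u hζ hu
    rw [mem_sphere_zero_iff_norm] at hζ
    have := norm_sub_norm_le ζ u
    linarith
  have hne0 : ∀ {ζ u : ℂ}, ζ ∈ sphere (0:ℂ) 1 → ‖u‖ ≤ 4⁻¹ → ζ - u ≠ 0 := by
    intro ζ u hζ hu h0
    have := hne hζ hu
    rw [h0] at this; simp at this; linarith
  have hint : ∀ {u : ℂ}, ‖u‖ ≤ 4⁻¹ → CircleIntegrable (fun ζ => (ζ - u)⁻¹ • g ζ) 0 1 := by
    intro u hu
    refine ContinuousOn.circleIntegrable (by norm_num) ?_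
    intro ζ hζ
    exact (((continuousOn_id.sub continuousOn_const).inv₀
      (fun z hz => hne0 hz hu)) ζ hζ).smul (hg.continuous.continuousOn ζ hζ)
  have key : g w - g w' = (2*(π:ℂ)*I)⁻¹ •
      ∮ ζ in C(0, 1), ((ζ - w)⁻¹ • g ζ - (ζ - w')⁻¹ • g ζ) := by
    rw [circleIntegral.integral_sub (hint hw) (hint hw'), smul_sub, hC hw, hC hw']
  rw [key]
  have hbnd : ∀ ζ ∈ sphere (0:ℂ) 1,
      ‖(ζ - w)⁻¹ • g ζ - (ζ - w')⁻¹ • g ζ‖ ≤ 16/9 * M * ‖w - w'‖ := by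
    intro ζ hζ
    rw [smul_eq_mul, smul_eq_mul, ← sub_mul, norm_mul]
    have h1 : ‖(ζ - w)⁻¹ - (ζ - w')⁻¹‖ ≤ 16/9 * ‖w - w'‖ := by
      rw [inv_sub_inv (hne0 hζ hw) (hne0 hζ hw')]
      have : ζ - w' - (ζ - w) = w - w' := by ring
      rw [this, norm_div, norm_mul]
      have hp : (9:ℝ)/16 ≤ ‖ζ - w‖ * ‖ζ - w'‖ := by nlinarith [hne hζ hw, hne hζ hw']
      rw [div_le_iff₀ (by linarith : (0:ℝ) < ‖ζ - w‖ * ‖ζ - w'‖)]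
      nlinarith [norm_nonneg (w - w')]
    have h2 : ‖g ζ‖ ≤ M := hM ζ (le_of_eq (mem_sphere_zero_iff_norm.1 hζ))
    calc ‖(ζ - w)⁻¹ - (ζ - w')⁻¹‖ * ‖g ζ‖ ≤ (16/9 * ‖w - w'‖) * M := by
          exact mul_le_mul h1 h2 (norm_nonneg _) (by positivity)
      _ = 16/9 * M * ‖w - w'‖ := by ring
  have hIb := circleIntegral.norm_integral_le_of_norm_le_const (by norm_num : (0:ℝ) ≤ 1) hbnd
  rw [norm_smul]
  have hn : ‖(2*(π:ℂ)*I)⁻¹‖ = (2*π)⁻¹ := by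
    simp [norm_inv, norm_mul, Complex.norm_I, Complex.norm_real, Real.norm_eq_abs,
      _root_.abs_of_nonneg Real.pi_pos.le]
  rw [hn]
  have hπ : (0:ℝ) < 2*π := by positivity
  calc (2*π)⁻¹ * ‖∮ ζ in C(0,1), ((ζ - w)⁻¹ • g ζ - (ζ - w')⁻¹ • g ζ)‖
      ≤ (2*π)⁻¹ * (2 * π * 1 * (16/9 * M * ‖w - w'‖)) := by
        exact mul_le_mul_of_nonneg_left hIb (by positivity)
    _ = 16/9 * M * ‖w - w'‖ := by field_simp
    _ ≤ 2 * M * ‖w - w'‖ := by nlinarith [norm_nonneg (w - w')]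

private lemma exists_bound (f : ℂ × ℂ → ℂ)
    (hf : ∀ z : ℂ × ℂ, z ≠ 0 → DifferentiableAt ℂ f z) :
    ∃ M : ℝ, 0 ≤ M ∧ ∀ z w : ℂ, ‖z‖ = 2⁻¹ → ‖w‖ ≤ 1 → ‖f (z, w)‖ ≤ M := by
  have hK : IsCompact ((sphere (0:ℂ) 2⁻¹) ×ˢ (closedBall (0:ℂ) 1)) :=
    (isCompact_sphere _ _).prod (isCompact_closedBall _ _)
  have hcont : ContinuousOn f ((sphere (0:ℂ) 2⁻¹) ×ˢ (closedBall (0:ℂ) 1)) := by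
    intro p hp
    have hp1 : ‖p.1‖ = 2⁻¹ := mem_sphere_zero_iff_norm.1 hp.1
    have hpne : p ≠ 0 := by
      intro h
      rw [h] at hp1; simp at hp1
    exact (hf p hpne).continuousAt.continuousWithinAt
  obtain ⟨C, hC⟩ := hK.exists_bound_of_continuousOn hcont
  refine ⟨max C 0, le_max_right _ _, fun z w hz hw => ?_⟩
  exact le_trans (hC (z, w) ⟨mem_sphere_zero_iff_norm.2 hz, mem_closedBall_zero_iff.2 hw⟩)
    (le_max_left _ _)

noncomputable def Gext (f : ℂ × ℂ → ℂ) : ℂ × ℂ → ℂ :=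
  fun p => (2*(π:ℂ)*I)⁻¹ • ∮ η in C(0, (2:ℝ)⁻¹), (η - p.1)⁻¹ • f (η, p.2)

section helpers
variable (f : ℂ × ℂ → ℂ) (hf : ∀ z : ℂ × ℂ, z ≠ 0 → DifferentiableAt ℂ f z)

private lemma eta_norm (θ : ℝ) : ‖circleMap 0 (2:ℝ)⁻¹ θ‖ = 2⁻¹ := by
  simp [norm_circleMap_zero]

private lemma eta_ne (θ : ℝ) : circleMap 0 (2:ℝ)⁻¹ θ ≠ 0 := by
  intro h
  have := eta_norm θ
  rw [h] at this; simp at this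

private lemma pair_ne_left {z w : ℂ} (hz : z ≠ 0) : (z, w) ≠ (0 : ℂ × ℂ) := by
  simp [Prod.ext_iff, hz]

private lemma pair_ne_right {z w : ℂ} (hw : w ≠ 0) : (z, w) ≠ (0 : ℂ × ℂ) := by
  simp [Prod.ext_iff, hw]

include hf in
private lemma slice_diff {z : ℂ} (hz : z ≠ 0) : Differentiable ℂ (fun w => f (z, w)) :=
  fun w => ((hf (z, w) (pair_ne_left hz)).comp w
    ((differentiableAt_const z).prodMk differentiableAt_id))

include hf in
private lemma integrand_cont {x : ℂ × ℂ} (hx : ‖x.1‖ < 2⁻¹) :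
    Continuous (fun θ : ℝ =>
      deriv (circleMap 0 (2:ℝ)⁻¹) θ * ((circleMap 0 (2:ℝ)⁻¹ θ - x.1)⁻¹ *
        f (circleMap 0 (2:ℝ)⁻¹ θ, x.2))) := by
  have hc : Continuous (circleMap 0 (2:ℝ)⁻¹) := continuous_circleMap _ _
  have hsub : ∀ θ, circleMap 0 (2:ℝ)⁻¹ θ - x.1 ≠ 0 := by
    intro θ h
    have h1 := eta_norm θ
    have := norm_sub_norm_le (circleMap 0 (2:ℝ)⁻¹ θ) x.1
    rw [h] at this
    simp only [norm_zero, h1] at this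
    linarith
  have hfc : Continuous (fun θ : ℝ => f (circleMap 0 (2:ℝ)⁻¹ θ, x.2)) := by
    rw [continuous_iff_continuousAt]
    intro θ
    exact ContinuousAt.comp (x := θ)
      ((hf (circleMap 0 (2:ℝ)⁻¹ θ, x.2) (pair_ne_left (eta_ne θ))).continuousAt)
      ((hc.prodMk (continuous_const (y := x.2))).continuousAt)
  simp only [deriv_circleMap]
  exact (hc.mul continuous_const).mul (((hc.sub continuous_const).inv₀ hsub).mul hfc)

omit hf in
private lemma integrand_bound {M : ℝ} (hM0 : 0 ≤ M)
    (hM : ∀ z w : ℂ, ‖z‖ = 2⁻¹ → ‖w‖ ≤ 1 → ‖f (z, w)‖ ≤ M)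
    {x : ℂ × ℂ} (hx : ‖x.1‖ < 2⁻¹) (hx2 : ‖x.2‖ ≤ 1) (θ : ℝ) :
    ‖deriv (circleMap 0 (2:ℝ)⁻¹) θ * ((circleMap 0 (2:ℝ)⁻¹ θ - x.1)⁻¹ *
        f (circleMap 0 (2:ℝ)⁻¹ θ, x.2))‖ ≤ 2⁻¹ * ((2⁻¹ - ‖x.1‖)⁻¹ * M) := by
  have h1 : ‖deriv (circleMap 0 (2:ℝ)⁻¹) θ‖ = 2⁻¹ := by
    simp [deriv_circleMap, norm_circleMap_zero]
  have h2 : (2⁻¹ : ℝ) - ‖x.1‖ ≤ ‖circleMap 0 (2:ℝ)⁻¹ θ - x.1‖ := by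
    have := norm_sub_norm_le (circleMap 0 (2:ℝ)⁻¹ θ) x.1
    rw [eta_norm θ] at this
    linarith
  have hpos : (0:ℝ) < 2⁻¹ - ‖x.1‖ := by linarith
  have h3 : ‖(circleMap 0 (2:ℝ)⁻¹ θ - x.1)⁻¹‖ ≤ (2⁻¹ - ‖x.1‖)⁻¹ := by
    rw [norm_inv]
    exact inv_anti₀ hpos h2
  have h4 : ‖f (circleMap 0 (2:ℝ)⁻¹ θ, x.2)‖ ≤ M := hM _ _ (eta_norm θ) hx2
  rw [norm_mul, norm_mul, h1]
  have := mul_le_mul h3 h4 (norm_nonneg _) (by positivity)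
  nlinarith [norm_nonneg ((circleMap 0 (2:ℝ)⁻¹ θ - x.1)⁻¹),
    norm_nonneg (f (circleMap 0 (2:ℝ)⁻¹ θ, x.2))]

end helpers

section eq
variable (f : ℂ × ℂ → ℂ) (hf : ∀ z : ℂ × ℂ, z ≠ 0 → DifferentiableAt ℂ f z)

include hf in
private lemma Gext_eq_of_snd_ne {q : ℂ × ℂ} (hq2 : q.2 ≠ 0) (hq1 : ‖q.1‖ < 2⁻¹) :
    Gext f q = f q := by
  have hd : Differentiable ℂ (fun z => f (z, q.2)) := fun z =>
    (hf (z, q.2) (pair_ne_right hq2)).comp z (differentiableAt_id.prodMk (differentiableAt_const _))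
  have := hd.diffContOnCl.two_pi_i_inv_smul_circleIntegral_sub_inv_smul
    (c := 0) (R := (2:ℝ)⁻¹) (w := q.1) (mem_ball_zero_iff.2 hq1)
  simpa [Gext] using this

include hf in
private lemma Gext_eq {p : ℂ × ℂ} (hp : p ≠ 0) (hp1 : ‖p.1‖ < 2⁻¹) :
    Gext f p = f p := by
  by_cases hp2 : p.2 = 0
  · have hp1ne : p.1 ≠ 0 := by
      intro h
      exact hp (Prod.ext_iff.2 ⟨h, hp2⟩)
    set w : ℕ → ℂ := fun n => ((n+1:ℕ):ℂ)⁻¹ with hwdef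
    have hwne : ∀ n, w n ≠ 0 := fun n =>
      inv_ne_zero (Nat.cast_ne_zero.2 (Nat.succ_ne_zero n))
    have hwnorm : ∀ n, ‖w n‖ ≤ 1 := by
      intro n
      rw [hwdef]
      rw [norm_inv, Complex.norm_natCast, inv_le_one_iff₀]
      right; exact_mod_cast Nat.one_le_iff_ne_zero.2 (Nat.succ_ne_zero n)
    have hwt : Tendsto w atTop (𝓝 0) := by
      rw [tendsto_zero_iff_norm_tendsto_zero]
      have : (fun n : ℕ => ‖w n‖) = fun n : ℕ => 1 / ((n:ℝ) + 1) := by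
        funext n
        rw [hwdef, norm_inv, Complex.norm_natCast, one_div]
        push_cast; ring_nf
      rw [this]
      exact tendsto_one_div_add_atTop_nhds_zero_nat
    -- convergence of the integrals
    have hA : Tendsto (fun n => Gext f (p.1, w n)) atTop (𝓝 (Gext f p)) := by
      have hGdef : ∀ q : ℂ × ℂ, Gext f q = (2*(π:ℂ)*I)⁻¹ •
          ∫ θ in (0:ℝ)..2*π, deriv (circleMap 0 (2:ℝ)⁻¹) θ *
            ((circleMap 0 (2:ℝ)⁻¹ θ - q.1)⁻¹ * f (circleMap 0 (2:ℝ)⁻¹ θ, q.2)) := by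
        intro q
        simp only [Gext, circleIntegral, smul_eq_mul]
      simp only [hGdef]
      obtain ⟨M, hM0, hM⟩ := exists_bound f hf
      refine Tendsto.const_smul ?_ _
      refine intervalIntegral.tendsto_integral_filter_of_dominated_convergence
        (bound := fun _ => 2⁻¹ * ((2⁻¹ - ‖p.1‖)⁻¹ * M)) ?_ ?_ ?_ ?_
      · exact Eventually.of_forall fun n =>
          (integrand_cont f hf (x := (p.1, w n)) hp1).aestronglyMeasurable
      · refine Eventually.of_forall fun n => ae_of_all _ fun θ _ => ?_
        exact integrand_bound f hM0 hM (x := (p.1, w n)) hp1 (hwnorm n) θ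
      · exact intervalIntegrable_const
      · refine ae_of_all _ fun θ _ => ?_
        have hfc : ContinuousAt f (circleMap 0 (2:ℝ)⁻¹ θ, (0:ℂ)) :=
          (hf _ (pair_ne_left (eta_ne θ))).continuousAt
        have h1 : Tendsto (fun n => (circleMap 0 (2:ℝ)⁻¹ θ, w n)) atTop
            (𝓝 (circleMap 0 (2:ℝ)⁻¹ θ, (0:ℂ))) := by
          rw [nhds_prod_eq]; exact tendsto_const_nhds.prodMk hwt
        have h2 : Tendsto (fun n => f (circleMap 0 (2:ℝ)⁻¹ θ, w n)) atTop
            (𝓝 (f (circleMap 0 (2:ℝ)⁻¹ θ, 0))) := hfc.tendsto.comp h1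
        have h3 := (h2.const_mul ((circleMap 0 (2:ℝ)⁻¹ θ - p.1)⁻¹)).const_mul
          (deriv (circleMap 0 (2:ℝ)⁻¹) θ)
        simpa [hp2] using h3
    have hB : Tendsto (fun n => f (p.1, w n)) atTop (𝓝 (f (p.1, 0))) :=
      ((hf (p.1, 0) (pair_ne_left hp1ne)).continuousAt.tendsto).comp
        (by rw [nhds_prod_eq]; exact tendsto_const_nhds.prodMk hwt)
    have heqn : (fun n => Gext f (p.1, w n)) = fun n => f (p.1, w n) :=
      funext fun n => Gext_eq_of_snd_ne f hf (q := (p.1, w n)) (hwne n) hp1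
    rw [heqn] at hA
    have : Gext f p = f (p.1, 0) := tendsto_nhds_unique hA hB
    rw [this]
    congr 1
    exact Prod.ext_iff.2 ⟨rfl, hp2.symm⟩
  · exact Gext_eq_of_snd_ne f hf hp2 hp1

end eq

section diff
variable (f : ℂ × ℂ → ℂ) (hf : ∀ z : ℂ × ℂ, z ≠ 0 → DifferentiableAt ℂ f z)

include hf in
private lemma cont_slice (c : ℂ) : Continuous fun θ : ℝ => f (circleMap 0 (2:ℝ)⁻¹ θ, c) := by
  rw [continuous_iff_continuousAt]
  intro θ
  exact ContinuousAt.comp (x := θ)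
    ((hf (circleMap 0 (2:ℝ)⁻¹ θ, c) (pair_ne_left (eta_ne θ))).continuousAt)
    (((continuous_circleMap _ _).prodMk (continuous_const (y := c))).continuousAt)

include hf in
private lemma b_meas :
    Measurable (fun θ : ℝ => deriv (fun w => f (circleMap 0 (2:ℝ)⁻¹ θ, w)) 0) := by
  set w : ℕ → ℂ := fun n => ((n+1:ℕ):ℂ)⁻¹ with hwdef
  have hwne : ∀ n, w n ≠ 0 := fun n =>
    inv_ne_zero (Nat.cast_ne_zero.2 (Nat.succ_ne_zero n))
  have hwt : Tendsto w atTop (𝓝 0) := by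
    rw [tendsto_zero_iff_norm_tendsto_zero]
    have : (fun n : ℕ => ‖w n‖) = fun n : ℕ => 1 / ((n:ℝ) + 1) := by
      funext n
      rw [hwdef, norm_inv, Complex.norm_natCast, one_div]
      push_cast; ring_nf
    rw [this]
    exact tendsto_one_div_add_atTop_nhds_zero_nat
  refine measurable_of_tendsto_metrizable
    (f := fun n θ => (f (circleMap 0 (2:ℝ)⁻¹ θ, w n) - f (circleMap 0 (2:ℝ)⁻¹ θ, 0)) / (w n - 0))
    (fun n => ((cont_slice f hf (w n)).sub (cont_slice f hf 0)).measurable.div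
      measurable_const) ?_
  rw [tendsto_pi_nhds]
  intro θ
  have hD : HasDerivAt (fun w => f (circleMap 0 (2:ℝ)⁻¹ θ, w))
      (deriv (fun w => f (circleMap 0 (2:ℝ)⁻¹ θ, w)) 0) 0 :=
    ((slice_diff f hf (eta_ne θ)) 0).hasDerivAt
  rw [hasDerivAt_iff_tendsto_slope] at hD
  have hwt' : Tendsto w atTop (𝓝[≠] 0) :=
    tendsto_nhdsWithin_of_tendsto_nhds_of_eventually_within _ hwt
      (Eventually.of_forall fun n => Set.mem_compl_singleton_iff.mpr (hwne n))
  have hcomp := hD.comp hwt'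
  have h2 : (slope (fun w => f (circleMap 0 (2:ℝ)⁻¹ θ, w)) 0 ∘ w)
      = fun n => (f (circleMap 0 (2:ℝ)⁻¹ θ, w n) - f (circleMap 0 (2:ℝ)⁻¹ θ, 0)) / (w n - 0) :=
    funext fun n => by rw [Function.comp_apply, slope_def_field]
  rw [h2] at hcomp
  exact hcomp

include hf in
private lemma Gext_diffAt : DifferentiableAt ℂ (Gext f) 0 := by
  obtain ⟨M, hM0, hM⟩ := exists_bound f hf
  have hder : Continuous (fun θ : ℝ => deriv (circleMap 0 (2:ℝ)⁻¹) θ) := by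
    simp only [deriv_circleMap]
    exact (continuous_circleMap _ _).mul continuous_const
  have hH := intervalIntegral.hasFDerivAt_integral_of_dominated_loc_of_lip
    (𝕜 := ℂ) (μ := MeasureTheory.volume) (a := 0) (b := 2*π) (x₀ := (0 : ℂ × ℂ)) (s := ball (0 : ℂ × ℂ) 4⁻¹)
    (F := fun (x : ℂ × ℂ) (θ : ℝ) => deriv (circleMap 0 (2:ℝ)⁻¹) θ *
      ((circleMap 0 (2:ℝ)⁻¹ θ - x.1)⁻¹ * f (circleMap 0 (2:ℝ)⁻¹ θ, x.2)))
    (F' := fun θ => (deriv (circleMap 0 (2:ℝ)⁻¹) θ *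
        ((circleMap 0 (2:ℝ)⁻¹ θ)⁻¹ * deriv (fun w => f (circleMap 0 (2:ℝ)⁻¹ θ, w)) 0)) •
          ContinuousLinearMap.snd ℂ ℂ ℂ
      + (deriv (circleMap 0 (2:ℝ)⁻¹) θ *
          (f (circleMap 0 (2:ℝ)⁻¹ θ, 0) * (1/(circleMap 0 (2:ℝ)⁻¹ θ)^2))) •
          ContinuousLinearMap.fst ℂ ℂ ℂ)
    (bound := fun _ => 12 * M)
    (Metric.ball_mem_nhds _ (by norm_num : (0:ℝ) < 4⁻¹)) ?_ ?_ ?_ ?_ ?_ ?_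
  · have hGr : Gext f = fun p => (2*(π:ℂ)*I)⁻¹ •
        ∫ θ in (0:ℝ)..2*π, deriv (circleMap 0 (2:ℝ)⁻¹) θ *
          ((circleMap 0 (2:ℝ)⁻¹ θ - p.1)⁻¹ * f (circleMap 0 (2:ℝ)⁻¹ θ, p.2)) := by
      funext p
      simp only [Gext, circleIntegral, smul_eq_mul]
    rw [hGr]
    exact (hH.2.differentiableAt).const_smul ((2*(π:ℂ)*I)⁻¹)
  · -- hF_meas
    filter_upwards [Metric.ball_mem_nhds (0:ℂ × ℂ) (by norm_num : (0:ℝ) < 4⁻¹)] with x hx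
    have hx1 : ‖x.1‖ < 2⁻¹ :=
      lt_of_le_of_lt (norm_fst_le x) (lt_trans (mem_ball_zero_iff.1 hx) (by norm_num))
    exact (integrand_cont f hf hx1).aestronglyMeasurable
  · -- hF_int
    exact ((integrand_cont f hf (x := 0) (by norm_num)).intervalIntegrable _ _)
  · -- hF'_meas
    have hc2 : Measurable (fun θ : ℝ => deriv (circleMap 0 (2:ℝ)⁻¹) θ *
        ((circleMap 0 (2:ℝ)⁻¹ θ)⁻¹ * deriv (fun w => f (circleMap 0 (2:ℝ)⁻¹ θ, w)) 0)) :=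
      hder.measurable.mul
        ((((continuous_circleMap 0 (2:ℝ)⁻¹).inv₀ eta_ne).measurable).mul (b_meas f hf))
    have hc1 : Measurable (fun θ : ℝ => deriv (circleMap 0 (2:ℝ)⁻¹) θ *
        (f (circleMap 0 (2:ℝ)⁻¹ θ, 0) * (1/(circleMap 0 (2:ℝ)⁻¹ θ)^2))) :=
      (hder.mul ((cont_slice f hf 0).mul
        (continuous_const.div ((continuous_circleMap 0 (2:ℝ)⁻¹).pow 2)
          (fun θ => pow_ne_zero 2 (eta_ne θ))))).measurable
    have hT : Continuous (fun q : ℂ × ℂ =>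
        q.1 • ContinuousLinearMap.snd ℂ ℂ ℂ + q.2 • ContinuousLinearMap.fst ℂ ℂ ℂ) :=
      (continuous_fst.smul continuous_const).add (continuous_snd.smul continuous_const)
    exact (hT.comp_stronglyMeasurable
      ((hc2.prodMk hc1).stronglyMeasurable)).aestronglyMeasurable
  · -- h_lip
    refine MeasureTheory.ae_of_all _ fun θ => ?_
    intro _
    rw [lipschitzOnWith_iff_dist_le_mul]
    intro x hx y hy
    rw [dist_eq_norm, dist_eq_norm]
    have hcoe : ((Real.nnabs (12 * M)) : ℝ) = 12 * M := by
      rw [Real.coe_nnabs, _root_.abs_of_nonneg (by positivity : (0:ℝ) ≤ 12 * M)]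
    rw [hcoe]
    have hxn : ‖x‖ < 4⁻¹ := mem_ball_zero_iff.1 hx
    have hyn : ‖y‖ < 4⁻¹ := mem_ball_zero_iff.1 hy
    have hx1 : ‖x.1‖ ≤ 4⁻¹ := le_trans (norm_fst_le x) hxn.le
    have hy1 : ‖y.1‖ ≤ 4⁻¹ := le_trans (norm_fst_le y) hyn.le
    have hx2 : ‖x.2‖ ≤ 4⁻¹ := le_trans (norm_snd_le x) hxn.le
    have hy2 : ‖y.2‖ ≤ 4⁻¹ := le_trans (norm_snd_le y) hyn.le
    have hηx : (4⁻¹:ℝ) ≤ ‖circleMap 0 (2:ℝ)⁻¹ θ - x.1‖ := by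
      have := norm_sub_norm_le (circleMap 0 (2:ℝ)⁻¹ θ) x.1
      rw [eta_norm θ] at this; linarith
    have hηy : (4⁻¹:ℝ) ≤ ‖circleMap 0 (2:ℝ)⁻¹ θ - y.1‖ := by
      have := norm_sub_norm_le (circleMap 0 (2:ℝ)⁻¹ θ) y.1
      rw [eta_norm θ] at this; linarith
    have hηxne : circleMap 0 (2:ℝ)⁻¹ θ - x.1 ≠ 0 := by
      intro h; rw [h] at hηx; simp at hηx; linarith
    have hηyne : circleMap 0 (2:ℝ)⁻¹ θ - y.1 ≠ 0 := by
      intro h; rw [h] at hηy; simp at hηy; linarith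
    have hub : ‖(circleMap 0 (2:ℝ)⁻¹ θ - x.1)⁻¹‖ ≤ 4 := by
      rw [norm_inv]
      calc ‖circleMap 0 (2:ℝ)⁻¹ θ - x.1‖⁻¹ ≤ (4⁻¹:ℝ)⁻¹ := inv_anti₀ (by norm_num) hηx
        _ = 4 := by norm_num
    have hvb : ‖f (circleMap 0 (2:ℝ)⁻¹ θ, y.2)‖ ≤ M :=
      hM _ _ (eta_norm θ) (le_trans hy2 (by norm_num))
    have hvlip : ‖f (circleMap 0 (2:ℝ)⁻¹ θ, x.2) - f (circleMap 0 (2:ℝ)⁻¹ θ, y.2)‖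
        ≤ 2 * M * ‖x.2 - y.2‖ :=
      lip_slice (slice_diff f hf (eta_ne θ)) hM0
        (fun ζ hζ => hM _ _ (eta_norm θ) hζ) hx2 hy2
    have hulip : ‖(circleMap 0 (2:ℝ)⁻¹ θ - x.1)⁻¹ - (circleMap 0 (2:ℝ)⁻¹ θ - y.1)⁻¹‖
        ≤ 16 * ‖x.1 - y.1‖ := by
      rw [inv_sub_inv hηxne hηyne]
      have hnum : circleMap 0 (2:ℝ)⁻¹ θ - y.1 - (circleMap 0 (2:ℝ)⁻¹ θ - x.1) = x.1 - y.1 := by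
        ring
      rw [hnum, norm_div, norm_mul]
      have hp : (1:ℝ)/16 ≤ ‖circleMap 0 (2:ℝ)⁻¹ θ - x.1‖ * ‖circleMap 0 (2:ℝ)⁻¹ θ - y.1‖ := by
        nlinarith
      rw [div_le_iff₀ (by linarith : (0:ℝ) < ‖circleMap 0 (2:ℝ)⁻¹ θ - x.1‖ *
        ‖circleMap 0 (2:ℝ)⁻¹ θ - y.1‖)]
      nlinarith [norm_nonneg (x.1 - y.1)]
    have hkey : deriv (circleMap 0 (2:ℝ)⁻¹) θ *
          ((circleMap 0 (2:ℝ)⁻¹ θ - x.1)⁻¹ * f (circleMap 0 (2:ℝ)⁻¹ θ, x.2))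
        - deriv (circleMap 0 (2:ℝ)⁻¹) θ *
          ((circleMap 0 (2:ℝ)⁻¹ θ - y.1)⁻¹ * f (circleMap 0 (2:ℝ)⁻¹ θ, y.2))
        = deriv (circleMap 0 (2:ℝ)⁻¹) θ *
          ((circleMap 0 (2:ℝ)⁻¹ θ - x.1)⁻¹ *
            (f (circleMap 0 (2:ℝ)⁻¹ θ, x.2) - f (circleMap 0 (2:ℝ)⁻¹ θ, y.2))
          + ((circleMap 0 (2:ℝ)⁻¹ θ - x.1)⁻¹ - (circleMap 0 (2:ℝ)⁻¹ θ - y.1)⁻¹) *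
            f (circleMap 0 (2:ℝ)⁻¹ θ, y.2)) := by ring
    rw [hkey, norm_mul]
    have hdn : ‖deriv (circleMap 0 (2:ℝ)⁻¹) θ‖ = 2⁻¹ := by
      simp [deriv_circleMap, norm_circleMap_zero]
    rw [hdn]
    have h12 : ‖x.1 - y.1‖ ≤ ‖x - y‖ := le_trans (le_of_eq rfl) (norm_fst_le (x - y))
    have h22 : ‖x.2 - y.2‖ ≤ ‖x - y‖ := le_trans (le_of_eq rfl) (norm_snd_le (x - y))
    have hsum : ‖(circleMap 0 (2:ℝ)⁻¹ θ - x.1)⁻¹ *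
            (f (circleMap 0 (2:ℝ)⁻¹ θ, x.2) - f (circleMap 0 (2:ℝ)⁻¹ θ, y.2))
          + ((circleMap 0 (2:ℝ)⁻¹ θ - x.1)⁻¹ - (circleMap 0 (2:ℝ)⁻¹ θ - y.1)⁻¹) *
            f (circleMap 0 (2:ℝ)⁻¹ θ, y.2)‖
        ≤ 4 * (2 * M * ‖x.2 - y.2‖) + 16 * ‖x.1 - y.1‖ * M := by
      refine le_trans (norm_add_le _ _) ?_
      rw [norm_mul, norm_mul]
      have t1 := mul_le_mul hub hvlip (norm_nonneg _) (by norm_num)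
      have t2 := mul_le_mul hulip hvb (norm_nonneg _) (by positivity)
      linarith
    have hfin : 4 * (2 * M * ‖x.2 - y.2‖) + 16 * ‖x.1 - y.1‖ * M ≤ 24 * M * ‖x - y‖ := by
      nlinarith [norm_nonneg (x - y)]
    calc 2⁻¹ * ‖(circleMap 0 (2:ℝ)⁻¹ θ - x.1)⁻¹ *
            (f (circleMap 0 (2:ℝ)⁻¹ θ, x.2) - f (circleMap 0 (2:ℝ)⁻¹ θ, y.2))
          + ((circleMap 0 (2:ℝ)⁻¹ θ - x.1)⁻¹ - (circleMap 0 (2:ℝ)⁻¹ θ - y.1)⁻¹) *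
            f (circleMap 0 (2:ℝ)⁻¹ θ, y.2)‖
        ≤ 2⁻¹ * (24 * M * ‖x - y‖) := by
          refine mul_le_mul_of_nonneg_left (le_trans hsum hfin) (by norm_num)
      _ = 12 * M * ‖x - y‖ := by ring
  · -- bound integrable
    exact intervalIntegrable_const
  · -- h_diff
    refine MeasureTheory.ae_of_all _ fun θ => ?_
    intro _
    have hu0 : HasDerivAt (fun z : ℂ => (circleMap 0 (2:ℝ)⁻¹ θ - z)⁻¹)
        (-(-1)/(circleMap 0 (2:ℝ)⁻¹ θ - 0)^2) 0 :=
      (((hasDerivAt_id (0:ℂ)).const_sub (circleMap 0 (2:ℝ)⁻¹ θ))).inv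
        (by simpa using eta_ne θ)
    have hu := HasDerivAt.comp_hasFDerivAt (𝕜 := ℂ) (0 : ℂ × ℂ) hu0 hasFDerivAt_fst
    have hv0 : HasDerivAt (fun w => f (circleMap 0 (2:ℝ)⁻¹ θ, w))
        (deriv (fun w => f (circleMap 0 (2:ℝ)⁻¹ θ, w)) 0) 0 :=
      ((slice_diff f hf (eta_ne θ)) 0).hasDerivAt
    have hv := HasDerivAt.comp_hasFDerivAt (𝕜 := ℂ) (0 : ℂ × ℂ) hv0 hasFDerivAt_snd
    have hfin := (hu.mul hv).const_mul (deriv (circleMap 0 (2:ℝ)⁻¹) θ)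
    refine hfin.congr_fderiv ?_
    refine ContinuousLinearMap.ext fun v => ?_
    simp only [ContinuousLinearMap.add_apply, ContinuousLinearMap.smul_apply,
      ContinuousLinearMap.coe_fst', ContinuousLinearMap.coe_snd', smul_eq_mul,
      Function.comp_apply, Prod.fst_zero, Prod.snd_zero, sub_zero]
    ring

end diff

/-- Hartogs-type extension across an isolated point in `ℂ²`:
a function holomorphic on `ℂ² ∖ {0}` extends holomorphically to all of `ℂ²`. -/
theorem extension_across_isolated_point
    (f : ℂ × ℂ → ℂ)
    (hf : ∀ z : ℂ × ℂ, z ≠ 0 → DifferentiableAt ℂ f z) :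
    ∃ F : ℂ × ℂ → ℂ, Differentiable ℂ F ∧ ∀ z : ℂ × ℂ, z ≠ 0 → F z = f z := by
  refine ⟨fun p => if p = 0 then Gext f 0 else f p, ?_, fun z hz => if_neg hz⟩
  intro p
  by_cases hp : p = 0
  · subst hp
    have hU : IsOpen {q : ℂ × ℂ | ‖q.1‖ < 2⁻¹} :=
      isOpen_lt (continuous_fst.norm) continuous_const
    have hmem : (0 : ℂ × ℂ) ∈ {q : ℂ × ℂ | ‖q.1‖ < 2⁻¹} := by simp
    have hev : (fun p : ℂ × ℂ => if p = 0 then Gext f 0 else f p) =ᶠ[𝓝 (0:ℂ × ℂ)] Gext f := by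
      filter_upwards [hU.mem_nhds hmem] with q hq
      by_cases h0 : q = 0
      · rw [if_pos h0, h0]
      · rw [if_neg h0]
        exact (Gext_eq f hf h0 hq).symm
    exact (Gext_diffAt f hf).congr_of_eventuallyEq hev
  · have hev : (fun p : ℂ × ℂ => if p = 0 then Gext f 0 else f p) =ᶠ[𝓝 p] f := by
      filter_upwards [isOpen_compl_singleton.mem_nhds
        (Set.mem_compl_singleton_iff.mpr hp)] with q hq
      exact if_neg hq
    exact (hf p hp).congr_of_eventuallyEq hev
end

section
/- Let n ≥ 2 and let Σ ⊆ ℂⁿ be a complex linear subspace of complex dimension at most n − 2 (i.e., of complex codimension at least 2). If f : ℂⁿ → ℂ is complex differentiable at every point of ℂⁿ ∖ Σ, then there exists a function F : ℂⁿ → ℂ that is complex differentiable at every point of ℂⁿ and agrees with f on ℂⁿ ∖ Σ. -/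
set_option linter.unusedSectionVars false
set_option maxHeartbeats 1000000

open Metric Set Function Complex Real MeasureTheory


/-- Cauchy estimate for the Fréchet derivative. -/
lemma norm_fderiv_le_of_closedBall {E : Type*} [NormedAddCommGroup E] [NormedSpace ℂ E]
    (f : E → ℂ) {q : E} {ε M : ℝ} (hε : 0 < ε)
    (hd : ∀ x ∈ closedBall q ε, DifferentiableAt ℂ f x)
    (hM : ∀ x ∈ closedBall q ε, ‖f x‖ ≤ M) :
    ‖fderiv ℂ f q‖ ≤ M / ε := by
  have hM0 : 0 ≤ M := le_trans (norm_nonneg _) (hM q (mem_closedBall_self hε.le))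
  refine ContinuousLinearMap.opNorm_le_bound _ (div_nonneg hM0 hε.le) (fun v => ?_)
  rcases eq_or_ne v 0 with rfl | hv
  · simp [div_nonneg hM0 hε.le]
  set u : E := (‖v‖ : ℂ)⁻¹ • v with hu_def
  have hu : ‖u‖ = 1 := by
    rw [hu_def, norm_smul, norm_inv, Complex.norm_real, Real.norm_eq_abs,
      _root_.abs_of_nonneg (norm_nonneg v)]
    exact inv_mul_cancel₀ (norm_ne_zero_iff.2 hv)
  have line : ∀ t : ℂ, ‖t‖ ≤ ε → q + t • u ∈ closedBall q ε := by
    intro t ht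
    simp only [mem_closedBall, dist_eq_norm, add_sub_cancel_left, norm_smul, hu, mul_one]
    exact ht
  set g : ℂ → ℂ := fun t => f (q + t • u) with hg_def
  have hline : ∀ t : ℂ, DifferentiableAt ℂ (fun s : ℂ => q + s • u) t := by
    intro t
    exact (differentiableAt_id.smul_const u).const_add q
  have hgd : ∀ t ∈ closedBall (0:ℂ) ε, DifferentiableAt ℂ g t := by
    intro t ht
    have h1 : q + t • u ∈ closedBall q ε := line t (by simpa [dist_eq_norm] using ht)
    exact (hd _ h1).comp t (hline t)
  have hderiv : HasDerivAt g (fderiv ℂ f q u) 0 := by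
    have h1 : HasDerivAt (fun s : ℂ => q + s • u) u 0 := by
      simpa using ((hasDerivAt_id (0:ℂ)).smul_const u).const_add q
    have h2 : HasFDerivAt f (fderiv ℂ f q) (q + (0:ℂ) • u) := by
      simpa using (hd q (mem_closedBall_self hε.le)).hasFDerivAt
    exact h2.comp_hasDerivAt 0 h1
  have hcl : DiffContOnCl ℂ g (ball (0:ℂ) ε) := by
    constructor
    · exact fun t ht => (hgd t (ball_subset_closedBall ht)).differentiableWithinAt
    · intro t ht
      have := (closure_ball_subset_closedBall : closure (ball (0:ℂ) ε) ⊆ closedBall 0 ε) ht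
      exact (hgd t this).continuousAt.continuousWithinAt
  have hest : ‖deriv g 0‖ ≤ M / ε := by
    refine Complex.norm_deriv_le_of_forall_mem_sphere_norm_le hε hcl (fun t ht => ?_)
    have : ‖t‖ ≤ ε := by
      rw [mem_sphere_iff_norm, sub_zero] at ht
      exact ht.le
    exact hM _ (line t this)
  have hderiv' : ‖fderiv ℂ f q u‖ ≤ M / ε := by rw [← hderiv.deriv]; exact hest
  have hvu : v = (‖v‖ : ℂ) • u := by
    rw [hu_def, smul_smul, mul_inv_cancel₀, one_smul]
    exact_mod_cast norm_ne_zero_iff.2 hv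
  calc ‖fderiv ℂ f q v‖ = ‖v‖ * ‖fderiv ℂ f q u‖ := by
        conv_lhs => rw [hvu]
        rw [_root_.map_smul, norm_smul, Complex.norm_real, Real.norm_eq_abs,
          _root_.abs_of_nonneg (norm_nonneg v)]
    _ ≤ ‖v‖ * (M / ε) := by
        exact mul_le_mul_of_nonneg_left hderiv' (norm_nonneg v)
    _ = M / ε * ‖v‖ := mul_comm _ _



section UpdateHelpers

variable {ι : Type*} [Fintype ι] [DecidableEq ι]

/-- The continuous linear map `x ↦ Function.update x i 0`. -/
noncomputable def Uproj (i : ι) : (ι → ℂ) →L[ℂ] (ι → ℂ) :=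
  ContinuousLinearMap.id ℂ _ - (ContinuousLinearMap.proj i).smulRight (Pi.single i 1)

lemma Uproj_apply (i : ι) (x : ι → ℂ) : Uproj i x = Function.update x i 0 := by
  funext j
  by_cases h : j = i
  · subst h
    simp [Uproj, Function.update_self, Pi.single_eq_same]
  · simp [Uproj, Function.update_of_ne h, Pi.single_eq_of_ne h]

lemma update_rep (z : ι → ℂ) (i : ι) :
    (fun w : ℂ => Function.update z i w) = fun w => Function.update z i 0 + w • (Pi.single i 1 : ι → ℂ) := by
  funext w j
  by_cases h : j = i
  · subst h; simp
  · simp [Function.update_of_ne h, Pi.single_eq_of_ne h]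

lemma update_rep' (i : ι) (w : ℂ) :
    (fun x : ι → ℂ => Function.update x i w) = fun x => Uproj i x + w • (Pi.single i 1 : ι → ℂ) := by
  funext x j
  rw [Uproj_apply]
  by_cases h : j = i
  · subst h; simp
  · simp [Function.update_of_ne h, Pi.single_eq_of_ne h]

lemma norm_Uproj_le (i : ι) : ‖Uproj i‖ ≤ 1 := by
  refine ContinuousLinearMap.opNorm_le_bound _ zero_le_one (fun x => ?_)
  rw [Uproj_apply, one_mul]
  refine (pi_norm_le_iff_of_nonneg (norm_nonneg x)).2 (fun j => ?_)
  by_cases h : j = i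
  · subst h; simp
  · rw [Function.update_of_ne h]
    exact norm_le_pi_norm x j

lemma norm_proj_le (i : ι) : ‖(ContinuousLinearMap.proj i : (ι → ℂ) →L[ℂ] ℂ)‖ ≤ 1 := by
  refine ContinuousLinearMap.opNorm_le_bound _ zero_le_one (fun x => ?_)
  rw [one_mul]
  exact norm_le_pi_norm x i

lemma norm_update_sub (x : ι → ℂ) (i : ι) (w : ℂ) :
    ‖Function.update x i w - x‖ ≤ ‖w - x i‖ := by
  refine (pi_norm_le_iff_of_nonneg (norm_nonneg _)).2 (fun j => ?_)
  by_cases h : j = i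
  · subst h; simp
  · simp [Function.update_of_ne h]

lemma hasFDerivAt_update_param (i : ι) (w : ℂ) (x : ι → ℂ) :
    HasFDerivAt (fun x : ι → ℂ => Function.update x i w) (Uproj i) x := by
  rw [update_rep' i w]
  simpa using ((Uproj i).hasFDerivAt (x := x)).add_const (w • (Pi.single i 1 : ι → ℂ))

lemma differentiableAt_update_slice (z : ι → ℂ) (i : ι) (w : ℂ) :
    DifferentiableAt ℂ (fun w : ℂ => Function.update z i w) w := by
  rw [update_rep z i]
  exact (differentiableAt_id.smul_const _).const_add _

lemma continuous_update_slice (z : ι → ℂ) (i : ι) :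
    Continuous (fun w : ℂ => Function.update z i w) := by
  rw [update_rep z i]
  exact continuous_const.add (continuous_id.smul continuous_const)

end UpdateHelpers

section MainLemma

variable {ι : Type*} [Fintype ι] [DecidableEq ι]

/-- The circle-integral candidate extension. -/
noncomputable def gInt (f : (ι → ℂ) → ℂ) (i : ι) (r : ℝ) (z : ι → ℂ) : ℂ :=
  ∮ w in C(0, r), (w - z i)⁻¹ • f (Function.update z i w)


variable {f : (ι → ℂ) → ℂ} {i0 i1 : ι}

lemma cauchy_formula_slice (hne : i0 ≠ i1)
    (hf : ∀ z : ι → ℂ, z i0 ≠ 0 ∨ z i1 ≠ 0 → DifferentiableAt ℂ f z)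
    {z : ι → ℂ} {r : ℝ} (hz1 : z i1 ≠ 0) (hzr : ‖z i0‖ < r) :
    gInt f i0 r z = (2 * π * I) • f z := by
  have hd : DifferentiableOn ℂ (fun w : ℂ => f (Function.update z i0 w)) (closedBall 0 r) := by
    intro w _
    refine DifferentiableAt.differentiableWithinAt ?_
    refine (hf _ (Or.inr ?_)).comp w (differentiableAt_update_slice z i0 w)
    rw [Function.update_of_ne (Ne.symm hne)]
    exact hz1
  have hmem : z i0 ∈ ball (0:ℂ) r := by simpa [mem_ball, dist_eq_norm] using hzr
  have := hd.circleIntegral_sub_inv_smul hmem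
  rw [gInt, this, Function.update_eq_self]

lemma radius_indep (hne : i0 ≠ i1)
    (hf : ∀ z : ι → ℂ, z i0 ≠ 0 ∨ z i1 ≠ 0 → DifferentiableAt ℂ f z)
    {z : ι → ℂ} {r R : ℝ} (hzr : ‖z i0‖ < r) (hrR : r ≤ R) :
    gInt f i0 r z = gInt f i0 R z := by
  have h0 : 0 < r := lt_of_le_of_lt (norm_nonneg _) hzr
  have key := Complex.circleIntegral_eq_of_differentiable_on_annulus_off_countable
    (c := (0:ℂ)) (r := r) (R := R) h0 hrR
    (f := fun w : ℂ => (w - z i0)⁻¹ • f (Function.update z i0 w))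
    (s := {z i0}) (countable_singleton _) ?_ ?_
  · rw [gInt, gInt, key]
  · -- continuity on the closed annulus
    intro w hw
    obtain ⟨hwR, hwr⟩ := hw
    have hwnorm : r ≤ ‖w‖ := by
      by_contra h
      exact hwr (by simpa [mem_ball, dist_eq_norm] using lt_of_not_ge h)
    have hw0 : w ≠ 0 := by
      intro h; rw [h] at hwnorm; simp at hwnorm; linarith
    have hwz : w - z i0 ≠ 0 := by
      intro h
      rw [sub_eq_zero] at h
      rw [h] at hwnorm
      linarith
    refine ContinuousAt.continuousWithinAt ?_
    refine ContinuousAt.smul ((continuousAt_id.sub continuousAt_const).inv₀ hwz) ?_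
    refine ContinuousAt.comp ?_ (continuous_update_slice z i0).continuousAt
    refine (hf _ (Or.inl ?_)).continuousAt
    rw [Function.update_self]
    exact hw0
  · -- differentiability on the open annulus minus the point z i0
    intro w hw
    obtain ⟨⟨hwR, hwr⟩, hws⟩ := hw
    have hwnorm : r < ‖w‖ := by
      by_contra h
      exact hwr (by simpa [mem_closedBall, dist_eq_norm] using not_lt.1 h)
    have hw0 : w ≠ 0 := by
      intro h; rw [h] at hwnorm; simp at hwnorm; linarith
    have hwz : w - z i0 ≠ 0 := by
      intro h
      exact hws (by simpa [sub_eq_zero] using h)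
    refine DifferentiableAt.smul (((differentiableAt_id.sub_const (z i0)).inv hwz : DifferentiableAt ℂ (fun w : ℂ => (w - z i0)⁻¹) w)) ?_
    refine (hf _ (Or.inl ?_)).comp w (differentiableAt_update_slice z i0 w)
    rw [Function.update_self]
    exact hw0

lemma gInt_differentiableAt
    (hf : ∀ z : ι → ℂ, z i0 ≠ 0 ∨ z i1 ≠ 0 → DifferentiableAt ℂ f z)
    {r : ℝ} {p : ι → ℂ} (hpr : ‖p i0‖ < r) :
    DifferentiableAt ℂ (gInt f i0 r) p := by
  classical
  have hr : 0 < r := lt_of_le_of_lt (norm_nonneg _) hpr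
  set ε : ℝ := min ((r - ‖p i0‖) / 2) (r / 2) with hε_def
  have hε : 0 < ε := lt_min (by linarith) (by linarith)
  have hε_r2 : ε ≤ r / 2 := min_le_right _ _
  have hε_half : ε ≤ (r - ‖p i0‖) / 2 := min_le_left _ _
  have hεlt : ‖p i0‖ + ε < r := by
    have : ε < r - ‖p i0‖ := lt_of_le_of_lt hε_half (by linarith)
    linarith
  set ρ : ℝ := r - (‖p i0‖ + ε) with hρ_def
  have hρ : 0 < ρ := by simp only [hρ_def]; linarith
  -- norm of circle points
  have hwnorm : ∀ θ : ℝ, ‖circleMap 0 r θ‖ = r := by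
    intro θ
    rw [norm_circleMap_zero, abs_of_pos hr]
  have hw0 : ∀ θ : ℝ, circleMap 0 r θ ≠ 0 := by
    intro θ h
    have := hwnorm θ
    rw [h, norm_zero] at this
    linarith
  -- coordinates of points in the ball
  have hxi0 : ∀ x ∈ ball p ε, ‖x i0‖ < ‖p i0‖ + ε := by
    intro x hx
    have h1 : ‖x i0 - p i0‖ ≤ ‖x - p‖ := norm_le_pi_norm (x - p) i0
    have h2 : ‖x - p‖ < ε := by rwa [mem_ball, dist_eq_norm] at hx
    calc ‖x i0‖ ≤ ‖p i0‖ + ‖x i0 - p i0‖ := by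
          simpa using norm_add_le (p i0) (x i0 - p i0)
      _ < ‖p i0‖ + ε := by linarith
  have hsub : ∀ x ∈ ball p ε, ∀ θ : ℝ, ρ ≤ ‖circleMap 0 r θ - x i0‖ := by
    intro x hx θ
    have h1 := hxi0 x hx
    have := norm_sub_norm_le (circleMap 0 r θ) (x i0)
    rw [hwnorm θ] at this
    simp only [hρ_def]
    linarith
  have hwx : ∀ x ∈ ball p ε, ∀ θ : ℝ, circleMap 0 r θ - x i0 ≠ 0 := by
    intro x hx θ h
    have := hsub x hx θ
    rw [h, norm_zero] at this
    linarith
  -- the compact set K and the bound M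
  set K : Set (ι → ℂ) := closedBall p (3 * r + ‖p‖) ∩ {y : ι → ℂ | r / 2 ≤ ‖y i0‖} with hK_def
  have hKcpt : IsCompact K :=
    (isCompact_closedBall _ _).inter_right
      (isClosed_le continuous_const ((continuous_apply i0).norm))
  have hK0 : ∀ y ∈ K, y i0 ≠ 0 := by
    intro y hy h
    have := hy.2
    rw [mem_setOf_eq, h, norm_zero] at this
    linarith
  have hfK : ContinuousOn f K := fun y hy => ((hf y (Or.inl (hK0 y hy))).continuousAt).continuousWithinAt
  obtain ⟨M0, hM0⟩ := hKcpt.exists_bound_of_continuousOn hfK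
  set M : ℝ := max M0 0 with hM_def
  have hM : ∀ y ∈ K, ‖f y‖ ≤ M := fun y hy => le_trans (hM0 y hy) (le_max_left _ _)
  have hMpos : 0 ≤ M := le_max_right _ _
  -- membership of the fattened slices in K
  have hqK : ∀ x ∈ ball p ε, ∀ θ : ℝ,
      ∀ y ∈ closedBall (Function.update x i0 (circleMap 0 r θ)) ε, y ∈ K := by
    intro x hx θ y hy
    set w := circleMap 0 r θ with hw_def
    set q := Function.update x i0 w with hq_def
    have hyq : ‖y - q‖ ≤ ε := by rwa [mem_closedBall, dist_eq_norm] at hy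
    have hxp : ‖x - p‖ < ε := by rwa [mem_ball, dist_eq_norm] at hx
    have hqx : ‖q - x‖ ≤ ‖w - x i0‖ := norm_update_sub x i0 w
    have hwxb : ‖w - x i0‖ ≤ r + (‖p‖ + ε) := by
      have h1 : ‖x i0‖ ≤ ‖p i0‖ + ε := (hxi0 x hx).le
      have h2 : ‖p i0‖ ≤ ‖p‖ := norm_le_pi_norm p i0
      calc ‖w - x i0‖ ≤ ‖w‖ + ‖x i0‖ := norm_sub_le _ _
        _ ≤ r + (‖p‖ + ε) := by rw [hwnorm θ]; linarith
    constructor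
    · rw [mem_closedBall, dist_eq_norm]
      have : y - p = (y - q) + (q - x) + (x - p) := by abel
      rw [this]
      calc ‖(y - q) + (q - x) + (x - p)‖ ≤ ‖(y - q) + (q - x)‖ + ‖x - p‖ := norm_add_le _ _
        _ ≤ ‖y - q‖ + ‖q - x‖ + ‖x - p‖ := by
            have := norm_add_le (y - q) (q - x); linarith
        _ ≤ ε + (r + (‖p‖ + ε)) + ε := by
            have := le_trans hqx hwxb
            linarith
        _ ≤ 3 * r + ‖p‖ := by
            have : ε ≤ r / 2 := hε_r2
            linarith
    · rw [mem_setOf_eq]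
      have h1 : ‖y i0 - w‖ ≤ ‖y - q‖ := by
        have := norm_le_pi_norm (y - q) i0
        simpa [hq_def, Function.update_self] using this
      have h2 : ‖y i0‖ ≥ ‖w‖ - ‖y i0 - w‖ := by
        have := norm_sub_norm_le w (y i0 - w)  -- not quite
        have h3 : w - (w - y i0) = y i0 := by ring
        calc ‖w‖ - ‖y i0 - w‖ = ‖w‖ - ‖w - y i0‖ := by rw [norm_sub_rev]
          _ ≤ ‖w - (w - y i0)‖ := norm_sub_norm_le _ _
          _ = ‖y i0‖ := by rw [h3]
      rw [hwnorm θ] at h2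
      have : ‖y i0‖ ≥ r - ε := by linarith [le_trans h1 hyq]
      linarith
  -- the fderiv bound
  have hfderiv_bound : ∀ x ∈ ball p ε, ∀ θ : ℝ,
      ‖fderiv ℂ f (Function.update x i0 (circleMap 0 r θ))‖ ≤ M / ε := by
    intro x hx θ
    refine norm_fderiv_le_of_closedBall f hε ?_ ?_
    · exact fun y hy => hf y (Or.inl (hK0 y (hqK x hx θ y hy)))
    · exact fun y hy => hM y (hqK x hx θ y hy)
  -- the parametrized integrand and its derivative
  set F : (ι → ℂ) → ℝ → ℂ := fun x θ =>
    deriv (circleMap 0 r) θ *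
      ((circleMap 0 r θ - x i0)⁻¹ * f (Function.update x i0 (circleMap 0 r θ))) with hF_def
  set F' : (ι → ℂ) → ℝ → (ι → ℂ) →L[ℂ] ℂ := fun x θ =>
    deriv (circleMap 0 r) θ •
      ((circleMap 0 r θ - x i0)⁻¹ •
          ((fderiv ℂ f (Function.update x i0 (circleMap 0 r θ))).comp (Uproj i0)) +
        f (Function.update x i0 (circleMap 0 r θ)) •
          (-((circleMap 0 r θ - x i0) ^ 2)⁻¹ •
            -(ContinuousLinearMap.proj i0 : (ι → ℂ) →L[ℂ] ℂ))) with hF'_def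
  have hg_eq : gInt f i0 r = fun x => ∫ θ in (0:ℝ)..(2 * π), F x θ := by
    funext x
    rw [gInt, circleIntegral]
    simp only [hF_def, smul_eq_mul]
  -- continuity of the integrand
  have hFcont : ∀ x : ι → ℂ, ‖x i0‖ < r → Continuous (F x) := by
    intro x hx
    have c1 : Continuous fun θ : ℝ => deriv (circleMap 0 r) θ := by
      simp only [deriv_circleMap]
      exact (continuous_circleMap 0 r).mul continuous_const
    have hne : ∀ θ : ℝ, circleMap 0 r θ - x i0 ≠ 0 := by
      intro θ h
      rw [sub_eq_zero] at h
      have := hwnorm θ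
      rw [h] at this
      linarith
    have c2 : Continuous fun θ : ℝ => (circleMap 0 r θ - x i0)⁻¹ :=
      ((continuous_circleMap 0 r).sub continuous_const).inv₀ hne
    have c3 : Continuous fun θ : ℝ => f (Function.update x i0 (circleMap 0 r θ)) := by
      rw [continuous_iff_continuousAt]
      intro θ
      have hq0 : (Function.update x i0 (circleMap 0 r θ)) i0 ≠ 0 := by
        rw [Function.update_self]; exact hw0 θ
      refine ContinuousAt.comp (g := f)
        (f := fun θ : ℝ => Function.update x i0 (circleMap 0 r θ)) (x := θ) ?_ ?_
      · exact (hf _ (Or.inl hq0)).continuousAt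
      · exact ((continuous_update_slice x i0).comp (continuous_circleMap 0 r)).continuousAt
    exact c1.mul (c2.mul c3)
  -- apply differentiation under the integral sign
  have key : HasFDerivAt (fun x => ∫ θ in (0:ℝ)..(2 * π), F x θ)
      (∫ θ in (0:ℝ)..(2 * π), F' p θ) p := by
    have hppε : p ∈ ball p ε := mem_ball_self hε
    refine intervalIntegral.hasFDerivAt_integral_of_dominated_of_fderiv_le
      (F := F) (F' := F') (bound := fun _ : ℝ => r * (ρ⁻¹ * (M / ε) + M * (ρ⁻¹ * ρ⁻¹)))
      (ball_mem_nhds p hε) ?_ ?_ ?_ ?_ ?_ ?_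
    · -- hF_meas
      filter_upwards [ball_mem_nhds p hε] with x hx
      exact ((hFcont x (lt_trans (hxi0 x hx) hεlt)).aestronglyMeasurable)
    · -- hF_int
      exact (hFcont p (lt_trans (by simpa using hxi0 p hppε) hεlt)).intervalIntegrable _ _
    · -- hF'_meas
      haveI : SecondCountableTopology ((ι → ℂ) →L[ℂ] ℂ) := inferInstance
      have mw : Continuous fun θ : ℝ => Function.update p i0 (circleMap 0 r θ) :=
        (continuous_update_slice p i0).comp (continuous_circleMap 0 r)
      have m1 : Measurable fun θ : ℝ => fderiv ℂ f (Function.update p i0 (circleMap 0 r θ)) :=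
        (measurable_fderiv ℂ f).comp mw.measurable
      have s1 : StronglyMeasurable
          fun θ : ℝ => fderiv ℂ f (Function.update p i0 (circleMap 0 r θ)) :=
        m1.stronglyMeasurable
      have s2 : StronglyMeasurable fun θ : ℝ =>
          (fderiv ℂ f (Function.update p i0 (circleMap 0 r θ))).comp (Uproj i0) := by
        have hcompU : Continuous fun A : (ι → ℂ) →L[ℂ] ℂ => A.comp (Uproj i0) :=
          ((ContinuousLinearMap.compL ℂ (ι → ℂ) (ι → ℂ) ℂ).flip (Uproj i0)).continuous
        exact hcompU.comp_stronglyMeasurable s1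
      have hpp : p ∈ ball p ε := mem_ball_self hε
      have c1 : Continuous fun θ : ℝ => deriv (circleMap 0 r) θ := by
        simp only [deriv_circleMap]
        exact (continuous_circleMap 0 r).mul continuous_const
      have c2 : Continuous fun θ : ℝ => (circleMap 0 r θ - p i0)⁻¹ :=
        ((continuous_circleMap 0 r).sub continuous_const).inv₀ (fun θ => hwx p hpp θ)
      have c3 : Continuous fun θ : ℝ => f (Function.update p i0 (circleMap 0 r θ)) := by
        rw [continuous_iff_continuousAt]
        intro θ
        have hq0 : (Function.update p i0 (circleMap 0 r θ)) i0 ≠ 0 := by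
          rw [Function.update_self]; exact hw0 θ
        refine ContinuousAt.comp (g := f)
          (f := fun θ : ℝ => Function.update p i0 (circleMap 0 r θ)) (x := θ) ?_ ?_
        · exact (hf _ (Or.inl hq0)).continuousAt
        · exact mw.continuousAt
      have c4 : Continuous fun θ : ℝ =>
          -((circleMap 0 r θ - p i0) ^ 2)⁻¹ •
            -(ContinuousLinearMap.proj i0 : (ι → ℂ) →L[ℂ] ℂ) := by
        exact Continuous.smul (((((continuous_circleMap 0 r).sub continuous_const).pow 2).inv₀
          (fun θ => pow_ne_zero 2 (hwx p hpp θ))).neg) continuous_const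
      refine StronglyMeasurable.aestronglyMeasurable ?_
      exact c1.stronglyMeasurable.smul
        ((c2.stronglyMeasurable.smul s2).add (c3.stronglyMeasurable.smul c4.stronglyMeasurable))
    · -- h_bound
      refine Filter.Eventually.of_forall (fun θ _ x hx => ?_)
      set w := circleMap 0 r θ with hw_def
      set q := Function.update x i0 w with hq_def
      set c := w - x i0 with hc_def
      have hρc : ρ ≤ ‖c‖ := hsub x hx θ
      have hcinv : ‖c‖⁻¹ ≤ ρ⁻¹ := by
        apply inv_anti₀ hρ hρc
      have hfq : ‖f q‖ ≤ M := hM q (hqK x hx θ q (mem_closedBall_self hε.le))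
      have hfd : ‖fderiv ℂ f q‖ ≤ M / ε := hfderiv_bound x hx θ
      have hder : ‖deriv (circleMap 0 r) θ‖ = r := by
        rw [deriv_circleMap, norm_mul, hwnorm θ, Complex.norm_I, mul_one]
      have hT1 : ‖c⁻¹ • ((fderiv ℂ f q).comp (Uproj i0))‖ ≤ ρ⁻¹ * (M / ε) := by
        have h1 : ‖(fderiv ℂ f q).comp (Uproj i0)‖ ≤ M / ε * 1 :=
          le_trans (ContinuousLinearMap.opNorm_comp_le _ _)
            (mul_le_mul hfd (norm_Uproj_le i0) (norm_nonneg _) (div_nonneg hMpos hε.le))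
        rw [mul_one] at h1
        calc ‖c⁻¹ • ((fderiv ℂ f q).comp (Uproj i0))‖
            ≤ ‖c⁻¹‖ * ‖(fderiv ℂ f q).comp (Uproj i0)‖ :=
              ContinuousLinearMap.opNorm_smul_le _ _
          _ = ‖c‖⁻¹ * ‖(fderiv ℂ f q).comp (Uproj i0)‖ := by rw [norm_inv]
          _ ≤ ρ⁻¹ * (M / ε) :=
              mul_le_mul hcinv h1 (norm_nonneg _) (inv_nonneg.2 hρ.le)
      have hT2 : ‖f q • (-(c ^ 2)⁻¹ •
          -(ContinuousLinearMap.proj i0 : (ι → ℂ) →L[ℂ] ℂ))‖ ≤ M * (ρ⁻¹ * ρ⁻¹) := by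
        have h2 : (‖c‖ ^ 2)⁻¹ ≤ ρ⁻¹ * ρ⁻¹ := by
          rw [sq, mul_inv]
          exact mul_le_mul hcinv hcinv (inv_nonneg.2 (norm_nonneg c)) (inv_nonneg.2 hρ.le)
        have h3 : ‖(ContinuousLinearMap.proj i0 : (ι → ℂ) →L[ℂ] ℂ)‖ ≤ 1 := norm_proj_le i0
        have h4 : ‖-(c ^ 2)⁻¹‖ = (‖c‖ ^ 2)⁻¹ := by
          rw [norm_neg, norm_inv, norm_pow]
        calc ‖f q • (-(c ^ 2)⁻¹ •
              -(ContinuousLinearMap.proj i0 : (ι → ℂ) →L[ℂ] ℂ))‖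
            ≤ ‖f q‖ * ‖-(c ^ 2)⁻¹ •
              -(ContinuousLinearMap.proj i0 : (ι → ℂ) →L[ℂ] ℂ)‖ := ContinuousLinearMap.opNorm_smul_le _ _
          _ ≤ ‖f q‖ * (‖-(c ^ 2)⁻¹‖ *
              ‖-(ContinuousLinearMap.proj i0 : (ι → ℂ) →L[ℂ] ℂ)‖) := by
              refine mul_le_mul_of_nonneg_left (ContinuousLinearMap.opNorm_smul_le _ _) (norm_nonneg _)
          _ = ‖f q‖ * ((‖c‖ ^ 2)⁻¹ *
              ‖(ContinuousLinearMap.proj i0 : (ι → ℂ) →L[ℂ] ℂ)‖) := by rw [h4, norm_neg]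
          _ ≤ M * (ρ⁻¹ * ρ⁻¹ * 1) := by
              refine mul_le_mul hfq ?_ ?_ hMpos
              · exact mul_le_mul h2 h3 (norm_nonneg _)
                  (mul_nonneg (inv_nonneg.2 hρ.le) (inv_nonneg.2 hρ.le))
              · exact mul_nonneg (inv_nonneg.2 (sq_nonneg _)) (norm_nonneg _)
          _ = M * (ρ⁻¹ * ρ⁻¹) := by ring
      show ‖deriv (circleMap 0 r) θ •
          (c⁻¹ • ((fderiv ℂ f q).comp (Uproj i0)) +
            f q • (-(c ^ 2)⁻¹ •
              -(ContinuousLinearMap.proj i0 : (ι → ℂ) →L[ℂ] ℂ)))‖ ≤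
          r * (ρ⁻¹ * (M / ε) + M * (ρ⁻¹ * ρ⁻¹))
      calc ‖deriv (circleMap 0 r) θ •
          (c⁻¹ • ((fderiv ℂ f q).comp (Uproj i0)) +
            f q • (-(c ^ 2)⁻¹ •
              -(ContinuousLinearMap.proj i0 : (ι → ℂ) →L[ℂ] ℂ)))‖
          ≤ ‖deriv (circleMap 0 r) θ‖ *
            ‖c⁻¹ • ((fderiv ℂ f q).comp (Uproj i0)) +
            f q • (-(c ^ 2)⁻¹ •
              -(ContinuousLinearMap.proj i0 : (ι → ℂ) →L[ℂ] ℂ))‖ :=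
                ContinuousLinearMap.opNorm_smul_le _ _
        _ ≤ r * (ρ⁻¹ * (M / ε) + M * (ρ⁻¹ * ρ⁻¹)) := by
            rw [hder]
            refine mul_le_mul_of_nonneg_left ?_ hr.le
            exact le_trans (norm_add_le _ _) (add_le_add hT1 hT2)
    · -- bound integrable
      exact intervalIntegrable_const
    · -- h_diff
      refine Filter.Eventually.of_forall (fun θ _ x hx => ?_)
      set w := circleMap 0 r θ with hw_def
      have hwx' : w - x i0 ≠ 0 := hwx x hx θ
      have hq0 : (Function.update x i0 w) i0 ≠ 0 := by
        rw [Function.update_self]; exact hw0 θ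
      have hproj : HasFDerivAt (fun x : ι → ℂ => x i0)
          (ContinuousLinearMap.proj i0 : (ι → ℂ) →L[ℂ] ℂ) x :=
        (ContinuousLinearMap.proj i0 : (ι → ℂ) →L[ℂ] ℂ).hasFDerivAt
      have hφ : HasFDerivAt (fun x : ι → ℂ => (w - x i0)⁻¹)
          (-((w - x i0) ^ 2)⁻¹ •
            -(ContinuousLinearMap.proj i0 : (ι → ℂ) →L[ℂ] ℂ)) x :=
        (hasDerivAt_inv hwx').comp_hasFDerivAt x (hproj.const_sub w)
      have hψ : HasFDerivAt (fun x : ι → ℂ => f (Function.update x i0 w))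
          ((fderiv ℂ f (Function.update x i0 w)).comp (Uproj i0)) x :=
        ((hf _ (Or.inl hq0)).hasFDerivAt).comp x (hasFDerivAt_update_param i0 w x)
      exact (hφ.mul hψ).const_mul (deriv (circleMap 0 r) θ)
  have hdiff : DifferentiableAt ℂ (fun x => ∫ θ in (0:ℝ)..(2 * π), F x θ) p :=
    key.differentiableAt
  rwa [hg_eq]


lemma aux_main (hne : i0 ≠ i1)
    (hf : ∀ z : ι → ℂ, z i0 ≠ 0 ∨ z i1 ≠ 0 → DifferentiableAt ℂ f z) :
    ∃ F : (ι → ℂ) → ℂ, Differentiable ℂ F ∧ ∀ z, z i1 ≠ 0 → F z = f z := by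
  classical
  have h2πI : (2 * (π : ℂ) * Complex.I) ≠ 0 := by
    simp [Real.pi_ne_zero, Complex.I_ne_zero, Complex.ofReal_ne_zero]
  set F : (ι → ℂ) → ℂ := fun z =>
    if z i1 = 0 then (2 * (π : ℂ) * Complex.I)⁻¹ • gInt f i0 (1 + ‖z i0‖) z else f z
    with hF_def
  have hFf : ∀ z : ι → ℂ, z i1 ≠ 0 → F z = f z := by
    intro z hz
    simp only [hF_def, if_neg hz]
  refine ⟨F, ?_, hFf⟩
  intro p
  by_cases hp1 : p i1 = 0
  · -- near p, F equals the fixed-radius circle integral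
    set r : ℝ := 1 + ‖p i0‖ with hr_def
    have hpr : ‖p i0‖ < r := lt_one_add _
    have hdg : DifferentiableAt ℂ (gInt f i0 r) p := gInt_differentiableAt hf hpr
    have hopen2 : IsOpen {z : ι → ℂ | ‖z i0 - p i0‖ < 1 / 2} := by
      have : Continuous fun z : ι → ℂ => ‖z i0 - p i0‖ :=
        ((continuous_apply i0).sub continuous_const).norm
      exact isOpen_lt this continuous_const
    have hmem : p ∈ {z : ι → ℂ | ‖z i0 - p i0‖ < 1 / 2} := by
      simp only [mem_setOf_eq, sub_self, norm_zero]
      norm_num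
    have hev : F =ᶠ[nhds p] fun z => (2 * (π : ℂ) * Complex.I)⁻¹ • gInt f i0 r z := by
      filter_upwards [hopen2.mem_nhds hmem] with z hz
      have hz0 : ‖z i0‖ < r := by
        have h1 : ‖z i0‖ ≤ ‖p i0‖ + ‖z i0 - p i0‖ := by
          simpa using norm_add_le (p i0) (z i0 - p i0)
        have h2 : ‖z i0 - p i0‖ < 1 / 2 := hz
        rw [hr_def]
        linarith
      by_cases hz1 : z i1 = 0
      · simp only [hF_def, if_pos hz1]
        congr 1
        rcases le_total (1 + ‖z i0‖) r with h | h
        · exact radius_indep hne hf (lt_one_add _) h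
        · exact (radius_indep hne hf hz0 h).symm
      · simp only [hF_def, if_neg hz1]
        rw [cauchy_formula_slice hne hf hz1 hz0, smul_smul, inv_mul_cancel₀ h2πI, one_smul]
    exact ((hdg.const_smul ((2 * (π : ℂ) * Complex.I)⁻¹) : DifferentiableAt ℂ (fun z => (2 * (π : ℂ) * Complex.I)⁻¹ • gInt f i0 r z) p)).congr_of_eventuallyEq hev
  · have hopen : IsOpen {z : ι → ℂ | z i1 ≠ 0} := by
      have : Continuous fun z : ι → ℂ => z i1 := continuous_apply i1
      exact isOpen_ne_fun this continuous_const
    have hev : F =ᶠ[nhds p] f := by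
      filter_upwards [hopen.mem_nhds hp1] with z hz
      exact hFf z hz
    exact (hf p (Or.inr hp1)).congr_of_eventuallyEq hev

end MainLemma

/-- Extension of holomorphic functions on `ℂⁿ` across a complex linear subspace of
complex codimension at least 2. -/
theorem extension_across_codim_two_subspace
    (n : ℕ) (hn : 2 ≤ n)
    (S : Submodule ℂ (Fin n → ℂ)) (hS : Module.finrank ℂ S ≤ n - 2)
    (f : (Fin n → ℂ) → ℂ)
    (hf : ∀ z : Fin n → ℂ, z ∉ S → DifferentiableAt ℂ f z) :
    ∃ F : (Fin n → ℂ) → ℂ, Differentiable ℂ F ∧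
      ∀ z : Fin n → ℂ, z ∉ S → F z = f z := by
  classical
  obtain ⟨S', hcompl⟩ := Submodule.exists_isCompl S
  set d := Module.finrank ℂ S with hd_def
  set d' := Module.finrank ℂ S' with hd'_def
  have hsum : d + d' = n := by
    have h1 := Submodule.finrank_add_eq_of_isCompl hcompl
    rwa [Module.finrank_fin_fun] at h1
  have hd2 : 2 ≤ d' := by omega
  set bS := Module.finBasis ℂ S with hbS_def
  set bS' := Module.finBasis ℂ S' with hbS'_def
  set e : (Fin n → ℂ) ≃ₗ[ℂ] ((Fin d ⊕ Fin d') → ℂ) :=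
    (Submodule.prodEquivOfIsCompl S S' hcompl).symm ≪≫ₗ
      ((bS.equivFun.prodCongr bS'.equivFun) ≪≫ₗ
        (LinearEquiv.sumArrowLequivProdArrow (Fin d) (Fin d') ℂ ℂ).symm) with he_def
  have hply : ∀ s ∈ S, ∀ a : Fin d', e s (Sum.inr a) = 0 := by
    intro s hs a
    have h1 : (Submodule.prodEquivOfIsCompl S S' hcompl).symm s = (⟨s, hs⟩, 0) :=
      Submodule.prodEquivOfIsCompl_symm_apply_left (h := hcompl) (x := (⟨s, hs⟩ : S))
    simp [he_def, h1]
  set ec : (Fin n → ℂ) ≃L[ℂ] ((Fin d ⊕ Fin d') → ℂ) := e.toContinuousLinearEquiv with hec_def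
  have hec_apply : ∀ x, ec x = e x := fun x => rfl
  set i0 : Fin d ⊕ Fin d' := Sum.inr ⟨0, by omega⟩ with hi0_def
  set i1 : Fin d ⊕ Fin d' := Sum.inr ⟨1, by omega⟩ with hi1_def
  have hne : i0 ≠ i1 := by
    simp only [hi0_def, hi1_def, ne_eq, Sum.inr.injEq, Fin.mk.injEq]
    omega
  set g : ((Fin d ⊕ Fin d') → ℂ) → ℂ := fun w => f (ec.symm w) with hg_def
  have hg : ∀ w, w i0 ≠ 0 ∨ w i1 ≠ 0 → DifferentiableAt ℂ g w := by
    intro w hw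
    have hxS : ec.symm w ∉ S := by
      intro hx
      have h0 : ∀ a : Fin d', e (ec.symm w) (Sum.inr a) = 0 := fun a => hply _ hx a
      have h0' : ∀ a : Fin d', w (Sum.inr a) = 0 := by
        intro a
        have := h0 a
        rw [← hec_apply, ContinuousLinearEquiv.apply_symm_apply] at this
        exact this
      rcases hw with h | h
      · exact h (h0' _)
      · exact h (h0' _)
    exact (hf _ hxS).comp w (ec.symm.differentiableAt)
  obtain ⟨G, hGdiff, hGeq⟩ := aux_main hne hg
  refine ⟨fun z => G (ec z), hGdiff.comp ec.differentiable, ?_⟩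
  intro z hz
  -- density argument: approximate z by points where `(ec z) i1 ≠ 0`
  set v : Fin n → ℂ := ec.symm (Pi.single i1 1) with hv_def
  set t : ℕ → ℂ := fun k => ((k : ℂ) + 1)⁻¹ with ht_def
  set a : ℂ := ec z i1 with ha_def
  have hvi : ∀ s : ℂ, ec (z + s • v) i1 = a + s := by
    intro s
    rw [map_add, _root_.map_smul]
    simp [hv_def, ha_def, Pi.single_eq_same]
  have htinj : ∀ j k : ℕ, t j = t k → j = k := by
    intro j k h
    simp only [ht_def] at h
    have h2 : ((j : ℂ) + 1) = ((k : ℂ) + 1) := inv_injective h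
    have : (j : ℂ) = (k : ℂ) := by
      have := add_right_cancel h2
      exact this
    exact_mod_cast this
  have hev : ∀ᶠ k in Filter.atTop, a + t k ≠ 0 := by
    by_cases hex : ∃ k0, a + t k0 = 0
    · obtain ⟨k0, hk0⟩ := hex
      refine Filter.eventually_atTop.2 ⟨k0 + 1, fun k hk hcontra => ?_⟩
      have h1 : t k = t k0 := by
        have := hk0 ▸ hcontra
        linear_combination hcontra - hk0
      have := htinj k k0 h1
      omega
    · push_neg at hex
      exact Filter.Eventually.of_forall hex
  have htlim : Filter.Tendsto t Filter.atTop (nhds 0) := by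
    have hr : Filter.Tendsto (fun k : ℕ => ((k : ℝ) + 1)⁻¹) Filter.atTop (nhds 0) := by
      simpa [one_div] using (tendsto_one_div_add_atTop_nhds_zero_nat : Filter.Tendsto (fun n : ℕ => 1 / ((n : ℝ) + 1)) Filter.atTop (nhds 0))
    have h1 : Filter.Tendsto (fun k : ℕ => ((((k : ℝ) + 1)⁻¹ : ℝ) : ℂ))
        Filter.atTop (nhds ((0 : ℝ) : ℂ)) := (Complex.continuous_ofReal.tendsto 0).comp hr
    have h2 : (fun k : ℕ => ((((k : ℝ) + 1)⁻¹ : ℝ) : ℂ)) = t := by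
      funext k
      simp only [ht_def]
      push_cast
      ring
    rw [h2] at h1
    simpa using h1
  have hseq : Filter.Tendsto (fun k : ℕ => z + t k • v) Filter.atTop (nhds z) := by
    have h1 := (htlim.smul_const v).const_add z
    simpa using h1
  have hlim1 : Filter.Tendsto (fun k : ℕ => G (ec (z + t k • v))) Filter.atTop
      (nhds (G (ec z))) := by
    have hc : ContinuousAt (fun z => G (ec z)) z := by
      have : Differentiable ℂ fun z => G (ec z) :=
        hGdiff.comp ec.differentiable
      exact this.continuous.continuousAt
    exact hc.tendsto.comp hseq
  have hlim2 : Filter.Tendsto (fun k : ℕ => f (z + t k • v)) Filter.atTop (nhds (f z)) :=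
    (hf z hz).continuousAt.tendsto.comp hseq
  have heq : ∀ᶠ k in Filter.atTop, G (ec (z + t k • v)) = f (z + t k • v) := by
    filter_upwards [hev] with k hk
    have h1 : (ec (z + t k • v)) i1 ≠ 0 := by rw [hvi]; exact hk
    rw [hGeq _ h1, hg_def]
    simp only []
    rw [ContinuousLinearEquiv.symm_apply_apply]
  exact tendsto_nhds_unique (hlim1.congr' heq) hlim2
end
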